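/- Suppose φ_s ∈ Φ_ε for all s, i.e. inf_x ∫φ_s(x,y)μ(dy) ≥ ε·sup_x ∫φ_s(x,y)μ(dy), and let a_s = sup_x ∫φ_s(x,y)μ(dy). If E[D_{≤j}(G(P_s,φ_s))] → α ∈ (0,∞) for some fixed j, then s·a_s → ∞ and moreover s·a_s = Θ(log s) as s → ∞. -/

import Mathlib

open MeasureTheory Filter

/-- Auxiliary: for a probability measure, the integral of a function bounded
between two constants lies between those constants. -/
private lemma intBound' {X : Type*} [MeasurableSpace X] (μ : Measure X)
    [IsProbabilityMeasure μ] {f : X → ℝ} (hf : AEStronglyMeasurable f μ)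
    {c C : ℝ} (hc : ∀ x, c ≤ f x) (hC : ∀ x, f x ≤ C) :
    c ≤ ∫ x, f x ∂μ ∧ ∫ x, f x ∂μ ≤ C := by
  have hint : Integrable f μ := by
    refine Integrable.mono' (integrable_const (max |c| |C|)) hf (ae_of_all _ fun x => ?_)
    rw [Real.norm_eq_abs, abs_le]
    constructor
    · exact le_trans (((neg_le_neg (le_max_left |c| |C|)).trans (neg_abs_le c))) (hc x)
    · exact (hC x).trans ((le_abs_self C).trans (le_max_right _ _))
  constructor
  · calc c = ∫ _, c ∂μ := by simp
      _ ≤ ∫ x, f x ∂μ := integral_mono (integrable_const c) hint hc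
  · calc ∫ x, f x ∂μ ≤ ∫ _, C ∂μ := integral_mono hint (integrable_const C) hC
      _ = C := by simp

/-- If `φ_s` is `ε`-homogeneous with `a_s = sup_x ∫ φ_s(x,y) μ(dy)` and the expected
number of vertices of degree at most `j` (given by the Mecke formula) tends to
`α ∈ (0,∞)`, then `s⋅a_s → ∞` and moreover `s⋅a_s = Θ(log s)` as `s → ∞`. -/
theorem degree_threshold_theta_log {X : Type*} [MeasurableSpace X] (μ : Measure X)
    [IsProbabilityMeasure μ] (φ : ℝ → X → X → ℝ) (a : ℝ → ℝ) (ε : ℝ) (hε : 0 < ε)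
    (hmeas : ∀ s, Measurable (Function.uncurry (φ s)))
    (h0 : ∀ s x y, 0 ≤ φ s x y) (h1 : ∀ s x y, φ s x y ≤ 1)
    (hsym : ∀ s x y, φ s x y = φ s y x)
    (hub : ∀ s x, ∫ y, φ s x y ∂μ ≤ a s)
    (hhom : ∀ s x, ε * a s ≤ ∫ y, φ s x y ∂μ)
    (j : ℕ) (α : ℝ) (hα : 0 < α)
    (hlim : Tendsto (fun s : ℝ => ∑ i ∈ Finset.range (j + 1),
        s * ∫ x, (s * ∫ y, φ s x y ∂μ) ^ i / i.factorial *
          Real.exp (-(s * ∫ y, φ s x y ∂μ)) ∂μ)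
      atTop (nhds α)) :
    Tendsto (fun s => s * a s) atTop atTop ∧
    ∃ c C : ℝ, 0 < c ∧ 0 < C ∧
      ∀ᶠ s in atTop, c * Real.log s ≤ s * a s ∧ s * a s ≤ C * Real.log s := by
  obtain ⟨x₀⟩ : Nonempty X := μ.nonempty_of_neZero
  -- abbreviation for the expected value
  set F : ℝ → ℝ := fun s => ∑ i ∈ Finset.range (j + 1),
      s * ∫ x, (s * ∫ y, φ s x y ∂μ) ^ i / i.factorial *
        Real.exp (-(s * ∫ y, φ s x y ∂μ)) ∂μ with hF
  -- basic facts about the degree-intensity function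
  have hGm : ∀ s, Measurable fun x => ∫ y, φ s x y ∂μ := fun s =>
    ((hmeas s).stronglyMeasurable.integral_prod_right').measurable
  have hG0 : ∀ s x, 0 ≤ ∫ y, φ s x y ∂μ := fun s x => integral_nonneg (h0 s x)
  have hG1 : ∀ s x, ∫ y, φ s x y ∂μ ≤ 1 := by
    intro s x
    calc ∫ y, φ s x y ∂μ ≤ ∫ _, (1 : ℝ) ∂μ :=
          integral_mono_of_nonneg (ae_of_all _ (h0 s x)) (integrable_const 1)
            (ae_of_all _ (h1 s x))
      _ = 1 := by simp
  have ha0 : ∀ s, 0 ≤ a s := fun s => le_trans (hG0 s x₀) (hub s x₀)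
  have haε : ∀ s, a s ≤ 1 / ε := by
    intro s
    have h := (hhom s x₀).trans (hG1 s x₀)
    rw [le_div_iff₀ hε]
    linarith
  -- measurability of the integrands
  have hIm : ∀ (s : ℝ) (i : ℕ), AEStronglyMeasurable
      (fun x => (s * ∫ y, φ s x y ∂μ) ^ i / (i.factorial : ℝ) *
        Real.exp (-(s * ∫ y, φ s x y ∂μ))) μ := by
    intro s i
    exact ((((measurable_const.mul (hGm s)).pow_const i).div_const _).mul
      ((measurable_const.mul (hGm s)).neg.exp)).aestronglyMeasurable
  -- Lower bound on F
  have hFlow : ∀ s : ℝ, 0 ≤ s → s * Real.exp (-(s * a s)) ≤ F s := by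
    intro s hs
    have hg_le : ∀ x, s * ∫ y, φ s x y ∂μ ≤ s * a s := fun x =>
      mul_le_mul_of_nonneg_left (hub s x) hs
    have hg_nn : ∀ x, 0 ≤ s * ∫ y, φ s x y ∂μ := fun x => mul_nonneg hs (hG0 s x)
    have hterm0 : s * Real.exp (-(s * a s)) ≤
        s * ∫ x, Real.exp (-(s * ∫ y, φ s x y ∂μ)) ∂μ := by
      refine mul_le_mul_of_nonneg_left ?_ hs
      refine (intBound' μ (C := 1) ((measurable_const.mul (hGm s)).neg.exp).aestronglyMeasurable
        (fun x => Real.exp_le_exp.mpr (by show -(s * a s) ≤ -(s * ∫ y, φ s x y ∂μ); linarith [hg_le x])) (fun x => ?_)).1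
      exact Real.exp_le_one_iff.mpr (by show -(s * ∫ y, φ s x y ∂μ) ≤ 0; linarith [hg_nn x])
    calc s * Real.exp (-(s * a s))
        ≤ s * ∫ x, (s * ∫ y, φ s x y ∂μ) ^ 0 / ((0 : ℕ).factorial : ℝ) *
            Real.exp (-(s * ∫ y, φ s x y ∂μ)) ∂μ := by simpa using hterm0
      _ ≤ F s := by
          refine Finset.single_le_sum (f := fun i => s * ∫ x,
              (s * ∫ y, φ s x y ∂μ) ^ i / (i.factorial : ℝ) *
              Real.exp (-(s * ∫ y, φ s x y ∂μ)) ∂μ) (fun i _ => ?_)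
            (Finset.mem_range.mpr (Nat.succ_pos j))
          refine mul_nonneg hs (integral_nonneg fun x => ?_)
          exact mul_nonneg (div_nonneg (pow_nonneg (hg_nn x) i) (Nat.cast_nonneg _))
            (Real.exp_pos _).le
  -- Upper bound on F (when ε·s·a_s ≥ 1)
  have hFup : ∀ s : ℝ, 0 ≤ s → 1 ≤ ε * (s * a s) →
      F s ≤ ((j : ℝ) + 1) * (s * ((s * a s) ^ j * Real.exp (-(ε * (s * a s))))) := by
    intro s hs hεT
    have hg_le : ∀ x, s * ∫ y, φ s x y ∂μ ≤ s * a s := fun x =>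
      mul_le_mul_of_nonneg_left (hub s x) hs
    have hg_ge : ∀ x, ε * (s * a s) ≤ s * ∫ y, φ s x y ∂μ := by
      intro x
      have h := mul_le_mul_of_nonneg_left (hhom s x) hs
      calc ε * (s * a s) = s * (ε * a s) := by ring
        _ ≤ s * ∫ y, φ s x y ∂μ := h
    have hg1 : ∀ x, 1 ≤ s * ∫ y, φ s x y ∂μ := fun x => hεT.trans (hg_ge x)
    have hT0 : 0 ≤ s * a s := mul_nonneg hs (ha0 s)
    have key : ∀ i ∈ Finset.range (j + 1),
        s * ∫ x, (s * ∫ y, φ s x y ∂μ) ^ i / (i.factorial : ℝ) *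
            Real.exp (-(s * ∫ y, φ s x y ∂μ)) ∂μ ≤
          s * ((s * a s) ^ j * Real.exp (-(ε * (s * a s)))) := by
      intro i hi
      refine mul_le_mul_of_nonneg_left ?_ hs
      refine (intBound' μ (hIm s i) (c := 0) (fun x =>
        mul_nonneg (div_nonneg (pow_nonneg (by linarith [hg1 x]) i) (Nat.cast_nonneg _))
          (Real.exp_pos _).le) (fun x => ?_)).2
      have h1' : (s * ∫ y, φ s x y ∂μ) ^ i / (i.factorial : ℝ) ≤
          (s * ∫ y, φ s x y ∂μ) ^ i :=
        div_le_self (pow_nonneg (by linarith [hg1 x]) i)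
          (Nat.one_le_cast.mpr i.factorial_pos)
      have h2 : (s * ∫ y, φ s x y ∂μ) ^ i ≤ (s * ∫ y, φ s x y ∂μ) ^ j :=
        pow_le_pow_right₀ (hg1 x) (Nat.lt_succ_iff.mp (Finset.mem_range.mp hi))
      have h3 : (s * ∫ y, φ s x y ∂μ) ^ j ≤ (s * a s) ^ j :=
        pow_le_pow_left₀ (by linarith [hg1 x]) (hg_le x) j
      have h4 : Real.exp (-(s * ∫ y, φ s x y ∂μ)) ≤ Real.exp (-(ε * (s * a s))) :=
        Real.exp_le_exp.mpr (by linarith [hg_ge x])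
      exact mul_le_mul ((h1'.trans h2).trans h3) h4 (Real.exp_pos _).le (pow_nonneg hT0 j)
    have hsum := Finset.sum_le_sum key
    rw [Finset.sum_const, Finset.card_range, nsmul_eq_mul] at hsum
    push_cast at hsum
    exact hsum.trans (le_of_eq (by ring))
  -- Eventually F s < 2α, hence s·a_s ≥ log s - log(2α)
  have h2α : ∀ᶠ s in atTop, F s < 2 * α := hlim.eventually_lt_const (by linarith)
  have hTlow : ∀ᶠ s in atTop, Real.log s - Real.log (2 * α) ≤ s * a s := by
    filter_upwards [h2α, eventually_ge_atTop (1 : ℝ)] with s hFs hs1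
    have hs0 : (0 : ℝ) < s := lt_of_lt_of_le one_pos hs1
    have h := lt_of_le_of_lt (hFlow s hs0.le) hFs
    have hlt : Real.exp (-(s * a s)) < 2 * α / s := by
      rw [lt_div_iff₀ hs0]; linarith [mul_comm s (Real.exp (-(s * a s)))]
    have hlog := Real.log_lt_log (Real.exp_pos _) hlt
    rw [Real.log_exp, Real.log_div (by positivity) hs0.ne'] at hlog
    linarith
  -- Part 1: s·a_s → ∞
  have hTtop : Tendsto (fun s => s * a s) atTop atTop := by
    refine tendsto_atTop_mono' atTop hTlow ?_
    simpa [sub_eq_add_neg] using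
      tendsto_atTop_add_const_right atTop (-(Real.log (2 * α))) Real.tendsto_log_atTop
  refine ⟨hTtop, 1 / 2, ((j : ℝ) + 2) / ε, one_half_pos, by positivity, ?_⟩
  -- set up constants for the upper bound
  set C₂ : ℝ := (2 / α) * (((j : ℝ) + 1) / ε ^ j) with hC₂def
  have hC₂ : 0 < C₂ := by positivity
  have hαF : ∀ᶠ s in atTop, α / 2 < F s := hlim.eventually_const_lt (by linarith)
  have hT1 : ∀ᶠ s in atTop, 1 ≤ ε * (s * a s) := by
    filter_upwards [hTtop.eventually_ge_atTop (1 / ε)] with s hs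
    calc (1 : ℝ) = ε * (1 / ε) := by field_simp
      _ ≤ ε * (s * a s) := mul_le_mul_of_nonneg_left hs hε.le
  filter_upwards [hαF, hT1, eventually_ge_atTop (1 : ℝ),
      Real.tendsto_log_atTop.eventually_ge_atTop (2 * Real.log (2 * α)),
      Real.tendsto_log_atTop.eventually_ge_atTop (Real.log C₂), hTlow]
    with s hFs hεT hs1 hlog1 hlog2 hTl
  have hs0 : (0 : ℝ) < s := lt_of_lt_of_le one_pos hs1
  constructor
  · -- lower bound: (1/2) log s ≤ s a s
    linarith
  · -- upper bound
    have hup := (hFs.le.trans (hFup s hs0.le hεT))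
    set T := s * a s with hT
    have hT0 : 0 ≤ T := mul_nonneg hs0.le (ha0 s)
    -- multiply through by exp(ε T)
    have e1 : Real.exp (ε * T) * (α / 2) ≤
        Real.exp (ε * T) * (((j : ℝ) + 1) * (s * (T ^ j * Real.exp (-(ε * T))))) :=
      mul_le_mul_of_nonneg_left hup (Real.exp_pos _).le
    have e2 : Real.exp (ε * T) * (((j : ℝ) + 1) * (s * (T ^ j * Real.exp (-(ε * T))))) =
        ((j : ℝ) + 1) * (s * T ^ j) := by
      have hx : Real.exp (ε * T) * Real.exp (-(ε * T)) = 1 := by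
        rw [← Real.exp_add, add_neg_cancel, Real.exp_zero]
      calc Real.exp (ε * T) * (((j : ℝ) + 1) * (s * (T ^ j * Real.exp (-(ε * T)))))
          = ((j : ℝ) + 1) * (s * T ^ j) * (Real.exp (ε * T) * Real.exp (-(ε * T))) := by
            ring
        _ = ((j : ℝ) + 1) * (s * T ^ j) := by rw [hx, mul_one]
    rw [e2] at e1
    have e3 : Real.exp (ε * T) ≤ (2 / α) * (((j : ℝ) + 1) * (s * T ^ j)) := by
      have : Real.exp (ε * T) = (2 / α) * (Real.exp (ε * T) * (α / 2)) := by
        field_simp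
      rw [this]
      exact mul_le_mul_of_nonneg_left e1 (by positivity)
    -- bound T ≤ s / ε
    have hTs : T ≤ s / ε := by
      calc T = s * a s := hT
        _ ≤ s * (1 / ε) := mul_le_mul_of_nonneg_left (haε s) hs0.le
        _ = s / ε := by field_simp
    have e4 : Real.exp (ε * T) ≤ C₂ * s ^ (j + 1) := by
      calc Real.exp (ε * T) ≤ (2 / α) * (((j : ℝ) + 1) * (s * T ^ j)) := e3
        _ ≤ (2 / α) * (((j : ℝ) + 1) * (s * (s / ε) ^ j)) := by
            have := pow_le_pow_left₀ hT0 hTs j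
            have hj1 : (0 : ℝ) ≤ (j : ℝ) + 1 := by positivity
            have hα2 : (0 : ℝ) ≤ 2 / α := by positivity
            exact mul_le_mul_of_nonneg_left (mul_le_mul_of_nonneg_left
              (mul_le_mul_of_nonneg_left this hs0.le) hj1) hα2
        _ = C₂ * s ^ (j + 1) := by
            rw [hC₂def, div_pow]
            field_simp
            ring
    have e5 := Real.log_le_log (Real.exp_pos _) e4
    rw [Real.log_exp, Real.log_mul hC₂.ne' (pow_ne_zero _ hs0.ne'), Real.log_pow] at e5
    push_cast at e5
    -- ε T ≤ log C₂ + (j+1) log s ≤ (j+2) log s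
    have hlogs0 : 0 ≤ Real.log s := Real.log_nonneg hs1
    have e6 : ε * T ≤ ((j : ℝ) + 2) * Real.log s := by nlinarith
    rw [div_mul_eq_mul_div, le_div_iff₀ hε]
    linarith [e6, mul_comm T ε]
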